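/- For every integer w ≥ 0, the matrix valued polynomial P_w has degree exactly w, and its leading coefficient (the coefficient of x^w) equals (2^w · ((n+1)/2)_w / ((n+1) · w!)) · Id, a nonsingular scalar matrix, where (a)_w = a(a+1)⋯(a+w−1) denotes the Pochhammer symbol. -/

import Mathlib

open scoped BigOperators Matrix

noncomputable section

/-- Gegenbauer polynomials `C_k^lam` with natural number index, defined by the
three-term recurrence. -/
def Geg (lam : ℝ) : ℕ → ℝ → ℝ
  | 0 => fun _ => 1
  | 1 => fun x => 2 * lam * x
  | (k + 2) => fun x =>
      (2 * ((k : ℝ) + 2 + lam - 1) * x * Geg lam (k + 1) x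
        - ((k : ℝ) + 2 + 2 * lam - 2) * Geg lam k x) / ((k : ℝ) + 2)

/-- Gegenbauer polynomials with integer index, equal to `0` for negative index. -/
def GegZ (lam : ℝ) (k : ℤ) (x : ℝ) : ℝ :=
  if k < 0 then 0 else Geg lam k.toNat x

/-- The 2×2 matrix valued polynomials `P_w`. -/
def Pw (p n : ℝ) (w : ℕ) (x : ℝ) : Matrix (Fin 2) (Fin 2) ℂ :=
  !![(((1 / (n + 1)) * GegZ ((n + 1) / 2) (w : ℤ) x
        + (1 / (p + w)) * GegZ ((n + 3) / 2) ((w : ℤ) - 2) x : ℝ) : ℂ),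
     (((1 / (p + w)) * GegZ ((n + 3) / 2) ((w : ℤ) - 1) x : ℝ) : ℂ);
     (((1 / (n - p + w)) * GegZ ((n + 3) / 2) ((w : ℤ) - 1) x : ℝ) : ℂ),
     (((1 / (n + 1)) * GegZ ((n + 1) / 2) (w : ℤ) x
        + (1 / (n - p + w)) * GegZ ((n + 3) / 2) ((w : ℤ) - 2) x : ℝ) : ℂ)]

/-- The weight matrix `W_{p,n}` on `(-1,1)`. -/
def Wmat (p n : ℝ) (x : ℝ) : Matrix (Fin 2) (Fin 2) ℂ :=
  (((1 - x ^ 2) ^ (n / 2 - 1) : ℝ) : ℂ) •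
    !![((p * x ^ 2 + n - p : ℝ) : ℂ), ((-(n * x) : ℝ) : ℂ);
       ((-(n * x) : ℝ) : ℂ), (((n - p) * x ^ 2 + p : ℝ) : ℂ)]

/-- Entrywise derivative of a matrix valued function. -/
def mderiv (P : ℝ → Matrix (Fin 2) (Fin 2) ℂ) : ℝ → Matrix (Fin 2) (Fin 2) ℂ :=
  fun x => Matrix.of fun i j => deriv (fun t => P t i j) x

/-- The matrix valued inner product `⟨P,Q⟩ = ∫_{-1}^{1} P(x) W(x) Q(x)^* dx`. -/
def mint (p n : ℝ) (P Q : ℝ → Matrix (Fin 2) (Fin 2) ℂ) : Matrix (Fin 2) (Fin 2) ℂ :=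
  Matrix.of fun i j => ∫ x in (-1 : ℝ)..1, (P x * Wmat p n x * (Q x)ᴴ) i j

/-- A matrix valued function is polynomial if each entry is given by a polynomial. -/
def IsPolyMat (P : ℝ → Matrix (Fin 2) (Fin 2) ℂ) : Prop :=
  ∀ i j, ∃ q : Polynomial ℂ, ∀ x : ℝ, P x i j = q.eval (x : ℂ)


open Polynomial

private def GegP (lam : ℝ) : ℕ → Polynomial ℝ
  | 0 => 1
  | 1 => Polynomial.C (2 * lam) * Polynomial.X
  | (k + 2) =>
      Polynomial.C (2 * ((k : ℝ) + 1 + lam) / ((k : ℝ) + 2)) * (Polynomial.X * GegP lam (k + 1))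
        - Polynomial.C (((k : ℝ) + 2 * lam) / ((k : ℝ) + 2)) * GegP lam k

private lemma gegP_eval (lam x : ℝ) : ∀ k, Geg lam k x = (GegP lam k).eval x := by
  intro k
  induction k using Nat.twoStepInduction with
  | zero => simp [Geg, GegP]
  | one => simp [Geg, GegP]
  | more k ih1 ih2 =>
    have hk : ((k : ℝ) + 2) ≠ 0 := by positivity
    simp only [Geg, GegP, ih1, ih2, Polynomial.eval_sub, Polynomial.eval_mul,
      Polynomial.eval_C, Polynomial.eval_X]
    field_simp
    ring

private lemma gegP_natDegree (lam : ℝ) : ∀ k, (GegP lam k).natDegree ≤ k := by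
  intro k
  induction k using Nat.twoStepInduction with
  | zero => simp [GegP]
  | one =>
    simp only [GegP]
    calc (Polynomial.C (2*lam) * Polynomial.X).natDegree
        ≤ (Polynomial.C (2*lam)).natDegree + Polynomial.X.natDegree := natDegree_mul_le
      _ ≤ 1 := by rw [natDegree_C, natDegree_X]
  | more k ih1 ih2 =>
    simp only [GegP]
    apply le_trans (natDegree_sub_le _ _)
    apply max_le
    · calc (Polynomial.C _ * (Polynomial.X * GegP lam (k+1))).natDegree
          ≤ (Polynomial.X * GegP lam (k+1)).natDegree := natDegree_C_mul_le _ _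
        _ ≤ Polynomial.X.natDegree + (GegP lam (k+1)).natDegree := natDegree_mul_le
        _ ≤ 1 + (k+1) := by simpa using ih2
        _ = k + 2 := by ring
    · calc (Polynomial.C _ * GegP lam k).natDegree
          ≤ (GegP lam k).natDegree := natDegree_C_mul_le _ _
        _ ≤ k + 2 := le_trans ih1 (by omega)

private lemma gegP_coeff (lam : ℝ) : ∀ k, (GegP lam k).coeff k =
    2 ^ k * (ascPochhammer ℝ k).eval lam / k.factorial := by
  intro k
  induction k using Nat.twoStepInduction with
  | zero => simp [GegP]
  | one => simp [GegP, ascPochhammer_one]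
  | more k ih1 ih2 =>
    have h0 : (GegP lam k).coeff (k + 2) = 0 :=
      coeff_eq_zero_of_natDegree_lt (lt_of_le_of_lt (gegP_natDegree lam k) (by omega))
    simp only [GegP, coeff_sub, coeff_C_mul, coeff_X_mul, ih2, h0, mul_zero, sub_zero]
    have e2 : (ascPochhammer ℝ (k+1+1)).eval lam
        = (ascPochhammer ℝ k).eval lam * (lam + k) * (lam + (k+1)) := by
      rw [ascPochhammer_succ_eval, ascPochhammer_succ_eval]; push_cast; ring
    have e1 : (ascPochhammer ℝ (k+1)).eval lam
        = (ascPochhammer ℝ k).eval lam * (lam + k) := ascPochhammer_succ_eval ..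
    rw [e2, e1]
    have hk : ((k : ℝ) + 2) ≠ 0 := by positivity
    have hf1 : ((k+1).factorial : ℝ) ≠ 0 := by positivity
    rw [Nat.factorial_succ (k+1)]
    push_cast
    field_simp
    ring


/-- `P_w` has degree exactly `w`, with leading coefficient
`(2^w ((n+1)/2)_w / ((n+1) w!)) · Id`, a nonsingular scalar matrix. -/
theorem statement0 (p n : ℝ) (hp : 0 < p) (hpn : p < n) (w : ℕ) :
    ∃ c : ℕ → Matrix (Fin 2) (Fin 2) ℂ,
      (∀ x : ℝ, Pw p n w x = ∑ j ∈ Finset.range (w + 1), (x : ℂ) ^ j • c j) ∧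
      c w = (((2 ^ w * (ascPochhammer ℝ w).eval ((n + 1) / 2)) /
          ((n + 1) * (Nat.factorial w)) : ℝ) : ℂ) • (1 : Matrix (Fin 2) (Fin 2) ℂ) ∧
      ((2 ^ w * (ascPochhammer ℝ w).eval ((n + 1) / 2)) /
          ((n + 1) * (Nat.factorial w)) : ℝ) ≠ 0 := by
  classical
  have hn1 : (0:ℝ) < n + 1 := by linarith
  set lam : ℝ := (n + 1) / 2 with hlam
  set mu : ℝ := (n + 3) / 2 with hmu
  set g : Polynomial ℝ := GegP lam w with hgdef
  set h1 : Polynomial ℝ := if 1 ≤ w then GegP mu (w - 1) else 0 with h1def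
  set h2 : Polynomial ℝ := if 2 ≤ w then GegP mu (w - 2) else 0 with h2def
  have hg_eval : ∀ x : ℝ, GegZ lam (w : ℤ) x = g.eval x := by
    intro x
    simp only [GegZ, hgdef]
    rw [if_neg (by omega)]
    simpa using gegP_eval lam x w
  have h1_eval : ∀ x : ℝ, GegZ mu ((w : ℤ) - 1) x = h1.eval x := by
    intro x
    by_cases hw : 1 ≤ w
    · have hww : ((w : ℤ) - 1) = ((w - 1 : ℕ) : ℤ) := by omega
      rw [hww]
      simp only [GegZ, h1def, if_pos hw]
      rw [if_neg (by omega)]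
      simpa using gegP_eval mu x (w - 1)
    · have hw0 : w = 0 := by omega
      subst hw0
      simp [GegZ, h1def]
  have h2_eval : ∀ x : ℝ, GegZ mu ((w : ℤ) - 2) x = h2.eval x := by
    intro x
    by_cases hw : 2 ≤ w
    · have hww : ((w : ℤ) - 2) = ((w - 2 : ℕ) : ℤ) := by omega
      rw [hww]
      simp only [GegZ, h2def, if_pos hw]
      rw [if_neg (by omega)]
      simpa using gegP_eval mu x (w - 2)
    · interval_cases w <;> simp [GegZ, h2def]
  have hg_deg : g.natDegree ≤ w := gegP_natDegree lam w
  have h1_deg : h1.natDegree ≤ w := by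
    by_cases hw : 1 ≤ w
    · simp only [h1def, if_pos hw]
      exact le_trans (gegP_natDegree mu (w - 1)) (by omega)
    · simp [h1def, hw]
  have h2_deg : h2.natDegree ≤ w := by
    by_cases hw : 2 ≤ w
    · simp only [h2def, if_pos hw]
      exact le_trans (gegP_natDegree mu (w - 2)) (by omega)
    · simp [h2def, hw]
  have h1_coeff : h1.coeff w = 0 := by
    by_cases hw : 1 ≤ w
    · simp only [h1def, if_pos hw]
      exact Polynomial.coeff_eq_zero_of_natDegree_lt
        (lt_of_le_of_lt (gegP_natDegree mu (w - 1)) (by omega))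
    · simp [h1def, hw]
  have h2_coeff : h2.coeff w = 0 := by
    by_cases hw : 2 ≤ w
    · simp only [h2def, if_pos hw]
      exact Polynomial.coeff_eq_zero_of_natDegree_lt
        (lt_of_le_of_lt (gegP_natDegree mu (w - 2)) (by omega))
    · simp [h2def, hw]
  set q : Matrix (Fin 2) (Fin 2) (Polynomial ℝ) :=
    !![Polynomial.C (1 / (n + 1)) * g + Polynomial.C (1 / (p + w)) * h2,
       Polynomial.C (1 / (p + w)) * h1;
       Polynomial.C (1 / (n - p + w)) * h1,
       Polynomial.C (1 / (n + 1)) * g + Polynomial.C (1 / (n - p + w)) * h2] with hq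
  have hb : ∀ (a : ℝ) (r : Polynomial ℝ), r.natDegree ≤ w →
      (Polynomial.C a * r).natDegree ≤ w := fun a r hr =>
    le_trans (Polynomial.natDegree_C_mul_le a r) hr
  have hq_deg : ∀ i k, (q i k).natDegree < w + 1 := by
    intro i k
    fin_cases i <;> fin_cases k <;>
      simp only [hq, Fin.zero_eta, Fin.mk_one, Matrix.cons_val', Matrix.cons_val_zero,
        Matrix.cons_val_one, Matrix.head_cons, Matrix.empty_val', Matrix.cons_val_fin_one,
        Matrix.head_fin_const, Matrix.of_apply] <;>
      first
        | (apply Nat.lt_succ_of_le; with_reducible apply hb; exact h1_deg)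
        | exact Nat.lt_succ_of_le (le_trans (Polynomial.natDegree_add_le _ _)
            (max_le (hb _ _ hg_deg) (hb _ _ h2_deg)))
  refine ⟨fun j => Matrix.of fun i k => (((q i k).coeff j : ℝ) : ℂ), ?_, ?_, ?_⟩
  · intro x
    ext i k
    have hentry : Pw p n w x i k = (((q i k).eval x : ℝ) : ℂ) := by
      fin_cases i <;> fin_cases k <;>
        simp [Pw, hq, ← hlam, ← hmu, hg_eval x, h1_eval x, h2_eval x, mul_comm]
    rw [hentry, Polynomial.eval_eq_sum_range' (hq_deg i k), Matrix.sum_apply]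
    push_cast
    refine Finset.sum_congr rfl fun j _ => ?_
    simp [Matrix.smul_apply, Matrix.of_apply, mul_comm]
  · ext i k
    have hgw : g.coeff w = 2 ^ w * (ascPochhammer ℝ w).eval lam / w.factorial :=
      gegP_coeff lam w
    have hwf : (w.factorial : ℝ) ≠ 0 := by positivity
    fin_cases i <;> fin_cases k <;>
      simp [hq, Matrix.smul_apply, Matrix.one_apply, hgw, h1_coeff, h2_coeff, hlam] <;>
      · field_simp
  · have hasc : 0 < (ascPochhammer ℝ w).eval ((n + 1) / 2) :=
      ascPochhammer_pos w _ (by linarith)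
    have hnum : (0:ℝ) < 2 ^ w * (ascPochhammer ℝ w).eval ((n + 1) / 2) :=
      mul_pos (by positivity) hasc
    have hden : (0:ℝ) < (n + 1) * (w.factorial : ℝ) :=
      mul_pos hn1 (by positivity)
    exact ne_of_gt (div_pos hnum hden)


end
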